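/- arXiv:2004.02851 — 4 statements merged into one kernel-verified Lean document; each statement's English description precedes it below -/
import Mathlib

section
/- Invariance theorem (Kolmogorov): There exists a machine U such that for every machine M there is a constant c ∈ ℕ with C_U(τ) ≤ C_M(τ) + c for all strings τ ∈ 2^{<ω}. -/
open scoped ENNReal NNReal Classical

namespace AR

/-- Elements of Cantor space `2^ω`: infinite binary sequences. -/
abbrev Seq := ℕ → Bool

/-- Finite binary strings `2^{<ω}`. -/
abbrev Str := List Bool

/-- The first `n` bits of a sequence `A`, as a finite string (`A↾n`). -/
def pre (A : Seq) (n : ℕ) : Str := List.ofFn fun i : Fin n => A i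

/-- The basic clopen cylinder `[σ]` of all sequences extending `σ`. -/
def cyl (σ : Str) : Set Seq := {A | pre A σ.length = σ}

/-- A measure on Cantor space is *fair-coin* if every cylinder `[σ]` has measure
`2^{-|σ|}`; this uniquely characterizes the usual product measure `μ` on `2^ω`. -/
def FairCoin (μ : MeasureTheory.Measure Seq) : Prop :=
  ∀ σ : Str, μ (cyl σ) = (2 : ℝ≥0∞)⁻¹ ^ σ.length

/-- A machine is a partial computable function `2^{<ω} ⇀ 2^{<ω}`. -/
def IsMachine (M : Str →. Str) : Prop := Partrec M

/-- Kolmogorov complexity of `τ` relative to the machine `M`: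
`C_M(τ) = min{|σ| : M(σ)↓ = τ}`, with value `∞` if no such `σ` exists. -/
noncomputable def Cplx (M : Str →. Str) (τ : Str) : ℕ∞ :=
  sInf ((fun σ : Str => (σ.length : ℕ∞)) '' {σ | τ ∈ M σ})

/-- A universal machine: a machine simulating every machine up to an additive
constant.  `Cplx U` for universal `U` is plain Kolmogorov complexity `C`. -/
def UniversalMachine (U : Str →. Str) : Prop :=
  IsMachine U ∧ ∀ M : Str →. Str, IsMachine M → ∃ c : ℕ, ∀ τ, Cplx U τ ≤ Cplx M τ + c

/-- A set of strings is prefix-free if none of its elements is a proper initial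
segment of another. -/
def PrefixFree (S : Set Str) : Prop :=
  ∀ σ ∈ S, ∀ τ ∈ S, σ <+: τ → σ = τ

/-- A prefix-free machine: a machine whose domain is prefix-free. -/
def PrefixFreeMachine (M : Str →. Str) : Prop :=
  IsMachine M ∧ PrefixFree {σ | (M σ).Dom}

/-- A universal prefix-free machine.  `Cplx U` for such `U` is prefix-free
Kolmogorov complexity `K`. -/
def UniversalPFMachine (U : Str →. Str) : Prop :=
  PrefixFreeMachine U ∧
    ∀ M : Str →. Str, PrefixFreeMachine M → ∃ c : ℕ, ∀ τ, Cplx U τ ≤ Cplx M τ + c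

/-- A c.e. (recursively enumerable) predicate. -/
def CEPred {α} [Primcodable α] (p : α → Prop) : Prop :=
  Partrec fun a => Part.assert (p a) fun _ => Part.some ()

/-- A Martin-Löf test: a sequence of uniformly Σ⁰₁ classes `U i`, given by a single
c.e. set `W` of pairs, with `μ (U i) ≤ 2^{-i}`. -/
def MLTest (μ : MeasureTheory.Measure Seq) (U : ℕ → Set Seq) : Prop :=
  ∃ W : Set (ℕ × Str), CEPred (· ∈ W) ∧
    (∀ i, U i = ⋃ σ ∈ {σ : Str | (i, σ) ∈ W}, cyl σ) ∧
    ∀ i, μ (U i) ≤ (2 : ℝ≥0∞)⁻¹ ^ i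

/-- `A` is Martin-Löf random if it passes every Martin-Löf test. -/
def MLRandom (μ : MeasureTheory.Measure Seq) (A : Seq) : Prop :=
  ∀ U : ℕ → Set Seq, MLTest μ U → A ∉ ⋂ i, U i


open Nat.Partrec (Code) in
/-- Decompose a string of the form `1^e 0 ρ` into `(e, ρ)`. -/
def usplit (σ : Str) : Option (ℕ × Str) :=
  if σ.idxOf false < σ.length then some (σ.idxOf false, σ.drop (σ.idxOf false + 1))
  else none

open Nat.Partrec (Code) in
/-- The universal machine: on input `1^e 0 ρ`, run the `e`-th code on `ρ`. -/
noncomputable def Umach : Str →. Str := fun σ =>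
  (Part.ofOption (usplit σ)).bind fun p =>
    ((Denumerable.ofNat Code p.1).eval (Encodable.encode p.2)).bind fun n =>
      Part.ofOption (Encodable.decode (α := Str) n)

lemma drop_prim : Primrec₂ (fun (n : ℕ) (l : Str) => l.drop n) := by
  have h : Primrec fun p : ℕ × Str =>
      Nat.rec (motive := fun _ => Str) p.2 (fun _ ih => ih.tail) p.1 :=
    Primrec.nat_rec' Primrec.fst Primrec.snd
      ((Primrec.list_tail.comp (Primrec.snd.comp Primrec.snd)).to₂)
  refine h.of_eq fun p => ?_
  obtain ⟨n, l⟩ := p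
  induction n with
  | zero => simp
  | succ n ih => simpa [ih] using List.tail_drop l n

lemma usplit_prim : Primrec usplit := by
  have hidx : Primrec fun σ : Str => σ.idxOf false :=
    Primrec.list_idxOf.comp (.const false) .id
  exact Primrec.ite (Primrec.nat_lt.comp hidx Primrec.list_length)
    (Primrec.option_some.comp
      (hidx.pair (drop_prim.comp (Primrec.succ.comp hidx) Primrec.id)))
    (Primrec.const none)

open Nat.Partrec Nat.Partrec.Code in
lemma Umach_partrec : Partrec Umach := by
  have h1 : Partrec fun σ : Str => (Part.ofOption (usplit σ)) :=
    Computable.ofOption usplit_prim.to_comp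
  refine h1.bind ?_
  have h2 : Partrec fun q : Str × (ℕ × Str) =>
      (Denumerable.ofNat Code q.2.1).eval (Encodable.encode q.2.2) :=
    eval_part.comp ((Computable.ofNat _).comp (Computable.fst.comp Computable.snd))
      (Computable.encode.comp (Computable.snd.comp Computable.snd))
  refine h2.bind ?_
  exact Computable.ofOption (Computable.decode.comp Computable.snd)

lemma indexOf_replicate_app (e : ℕ) (σ : Str) :
    (List.replicate e true ++ false :: σ).idxOf false = e := by
  induction e with
  | zero => simp [List.idxOf_cons]
  | succ e ih => simp only [List.replicate_succ, List.cons_append, List.idxOf_cons]; simp [ih]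

open Nat.Partrec (Code) in
lemma usplit_eq (e : ℕ) (σ : Str) :
    usplit (List.replicate e true ++ false :: σ) = some (e, σ) := by
  have hlen : (List.replicate e true ++ false :: σ).length = e + (σ.length + 1) := by simp
  have hidx := indexOf_replicate_app e σ
  have hdrop : (List.replicate e true ++ false :: σ).drop (e + 1) = σ := by
    have : List.replicate e true ++ false :: σ = (List.replicate e true ++ [false]) ++ σ := by
      simp
    rw [this]
    have h1 : (List.replicate e true ++ [false]).length = e + 1 := by simp
    rw [← h1, List.drop_left]
  unfold usplit
  rw [hidx, hlen, hdrop]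
  simp [Nat.lt_add_of_pos_right]

/-- **Invariance theorem** (Kolmogorov): there is a machine `U` such that for every
machine `M` there is a constant `c` with `C_U(τ) ≤ C_M(τ) + c` for all strings `τ`. -/
theorem invariance_theorem :
    ∃ U : Str →. Str, IsMachine U ∧
      ∀ M : Str →. Str, IsMachine M → ∃ c : ℕ, ∀ τ : Str, Cplx U τ ≤ Cplx M τ + c := by
  refine ⟨Umach, Umach_partrec, fun M hM => ?_⟩
  obtain ⟨c, hc⟩ := Nat.Partrec.Code.exists_code.1 hM
  set e := Encodable.encode c with he
  refine ⟨e + 1, fun τ => ?_⟩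
  by_cases h : {σ : Str | τ ∈ M σ}.Nonempty
  · have hmem : Cplx M τ ∈ (fun σ : Str => (σ.length : ℕ∞)) '' {σ | τ ∈ M σ} :=
      csInf_mem (h.image _)
    obtain ⟨σ, hσ, hlen⟩ := hmem
    -- the universal machine succeeds on `1^e 0 σ`
    have hU : τ ∈ Umach (List.replicate e true ++ false :: σ) := by
      unfold Umach
      rw [usplit_eq]
      refine Part.mem_bind_iff.2 ⟨(e, σ), Part.mem_ofOption.2 rfl, ?_⟩
      simp only
      rw [Denumerable.ofNat_encode, hc]
      refine Part.mem_bind_iff.2 ⟨Encodable.encode τ, ?_, ?_⟩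
      · refine Part.mem_bind_iff.2 ⟨σ, ?_, ?_⟩
        · simp [Encodable.encodek]
        · exact (Part.mem_map_iff _).2 ⟨τ, hσ, rfl⟩
      · simp [Encodable.encodek]
    have hle : Cplx Umach τ ≤ ((List.replicate e true ++ false :: σ).length : ℕ∞) :=
      sInf_le ⟨_, hU, rfl⟩
    refine hle.trans_eq ?_
    rw [← hlen]
    have : (List.replicate e true ++ false :: σ).length = σ.length + (e + 1) := by
      simp; ring
    rw [this]
    push_cast
    rfl
  · have : Cplx M τ = ⊤ := by
      unfold Cplx
      rw [Set.not_nonempty_iff_eq_empty.1 h, Set.image_empty, sInf_empty]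
    rw [this, top_add]
    exact le_top

end AR
end

section
/- Martin-Löf's complexity-dip theorem: For every A ∈ 2^ω there are infinitely many n with C(A↾n) ≤ n − ⌊log₂ n⌋. In particular, no A ∈ 2^ω satisfies: there is a c ∈ ℕ with C(A↾n) ≥ n − c for all n. -/
open scoped ENNReal NNReal Classical

namespace AR

/-! ### Auxiliary material for the proof of the complexity-dip theorem -/

/-- `t` bits of `A` starting at position `s`. -/
def seg (A : Seq) (s t : ℕ) : Str := List.ofFn fun i : Fin t => A (s + i)

@[simp] lemma pre_length (A : Seq) (n : ℕ) : (pre A n).length = n := by simp [pre]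

@[simp] lemma seg_length (A : Seq) (s t : ℕ) : (seg A s t).length = t := by simp [seg]

lemma pre_add (A : Seq) (s t : ℕ) : pre A (s + t) = pre A s ++ seg A s t := by
  unfold pre seg
  rw [List.ofFn_add]
  congr 1

/-- `k` bits of `j`, least-significant bit first. -/
def dec (k j : ℕ) : Str := (List.range k).map fun i => decide (j / 2 ^ i % 2 = 1)

/-- value of a string, least-significant bit first. -/
def val : Str → ℕ
  | [] => 0
  | b :: t => (cond b 1 0) + 2 * val t

lemma val_lt (ρ : Str) : val ρ < 2 ^ ρ.length := by
  induction ρ with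
  | nil => simp [val]
  | cons b t ih =>
    simp only [val, List.length_cons, pow_succ]
    cases b <;> simp <;> omega

lemma dec_succ (k j : ℕ) : dec (k + 1) j = decide (j % 2 = 1) :: dec k (j / 2) := by
  unfold dec
  rw [List.range_succ_eq_map, List.map_cons, List.map_map]
  congr 1
  · simp
  · congr 1
    funext i
    simp only [Function.comp]
    rw [Nat.div_div_eq_div_mul, ← pow_succ']

lemma dec_val (ρ : Str) (r : ℕ) : dec ρ.length (val ρ + 2 ^ ρ.length * r) = ρ := by
  induction ρ generalizing r with
  | nil => simp [dec]
  | cons b t ih =>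
    have hc : (cond b 1 0) < 2 := by cases b <;> simp
    simp only [List.length_cons, val, dec_succ, pow_succ]
    have he : cond b 1 0 + 2 * val t + 2 ^ t.length * 2 * r
        = cond b 1 0 + 2 * (val t + 2 ^ t.length * r) := by ring
    have h1 : (cond b 1 0 + 2 * val t + 2 ^ t.length * 2 * r) % 2 = cond b 1 0 := by
      rw [he, Nat.add_mul_mod_self_left, Nat.mod_eq_of_lt hc]
    have h2 : (cond b 1 0 + 2 * val t + 2 ^ t.length * 2 * r) / 2
        = val t + 2 ^ t.length * r := by
      rw [he, Nat.add_mul_div_left _ _ (by norm_num : (0:ℕ) < 2)]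
      cases b <;> simp
    rw [h1, h2, ih]
    cases b <;> simp

/-- The search condition of the dip machine: `k` codes a pair `(a, j)` with
`a = ⌊log₂ j⌋`, `a ≥ 2`, and the input length `l` lying in the interval
determined by `j`. -/
def goodb (l k : ℕ) : Bool :=
  decide (2 ≤ k.unpair.1) && decide (2 ^ k.unpair.1 ≤ k.unpair.2) &&
    decide (k.unpair.2 < 2 ^ (k.unpair.1 + 1)) &&
    decide (2 ^ k.unpair.2 + k.unpair.2 ≤ l + k.unpair.1) &&
    decide (l + k.unpair.1 < 2 ^ (k.unpair.2 + 1) + k.unpair.2)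

lemma goodb_iff (l k : ℕ) : goodb l k = true ↔
    (2 ≤ k.unpair.1 ∧ 2 ^ k.unpair.1 ≤ k.unpair.2 ∧ k.unpair.2 < 2 ^ (k.unpair.1 + 1) ∧
      2 ^ k.unpair.2 + k.unpair.2 ≤ l + k.unpair.1 ∧
      l + k.unpair.1 < 2 ^ (k.unpair.2 + 1) + k.unpair.2) := by
  simp [goodb, and_assoc]

/-- The output function of the dip machine. -/
def out (σ : Str) (k : ℕ) : Str :=
  dec k.unpair.1 k.unpair.2 ++ (dec k.unpair.2 (σ.length + k.unpair.1 - k.unpair.2) ++ σ)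

/-- The dip machine: search for the unique good pair, decode it, and
prepend the decoded bits to the input. -/
def dipM (σ : Str) : Part Str := (Nat.rfind ↑(goodb σ.length)).map (out σ)

lemma pow_primrec : Primrec₂ ((· ^ ·) : ℕ → ℕ → ℕ) :=
  Primrec₂.unpaired'.mp Nat.Primrec.pow

lemma dec_primrec : Primrec₂ dec := by
  have h1 : Primrec (fun p : ℕ × ℕ => List.range p.1) :=
    Primrec.list_range.comp Primrec.fst
  have hbit : Primrec₂ (fun (p : ℕ × ℕ) (i : ℕ) => (decide (p.2 / 2 ^ i % 2 = 1) : Bool)) := by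
    have hx : Primrec (fun q : (ℕ × ℕ) × ℕ => q.1.2 / 2 ^ q.2 % 2) :=
      Primrec₂.comp Primrec.nat_mod
        (Primrec₂.comp Primrec.nat_div (Primrec.snd.comp Primrec.fst)
          (Primrec₂.comp pow_primrec (Primrec.const 2) Primrec.snd))
        (Primrec.const 2)
    exact (Primrec₂.comp Primrec.eq.decide hx (Primrec.const 1)).to₂
  exact (Primrec.list_map h1 hbit).to₂

lemma goodb_primrec : Primrec₂ goodb := by
  have ha : Primrec (fun p : ℕ × ℕ => p.2.unpair.1) :=
    Primrec.fst.comp (Primrec.unpair.comp Primrec.snd)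
  have hj : Primrec (fun p : ℕ × ℕ => p.2.unpair.2) :=
    Primrec.snd.comp (Primrec.unpair.comp Primrec.snd)
  have hl : Primrec (fun p : ℕ × ℕ => p.1) := Primrec.fst
  have hand := Primrec.dom_bool₂ (· && ·)
  have b1 : Primrec (fun p : ℕ × ℕ => (decide (2 ≤ p.2.unpair.1) : Bool)) :=
    Primrec₂.comp Primrec.nat_le.decide (Primrec.const 2) ha
  have b2 : Primrec (fun p : ℕ × ℕ => (decide (2 ^ p.2.unpair.1 ≤ p.2.unpair.2) : Bool)) :=
    Primrec₂.comp Primrec.nat_le.decide (Primrec₂.comp pow_primrec (Primrec.const 2) ha) hj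
  have b3 : Primrec (fun p : ℕ × ℕ => (decide (p.2.unpair.2 < 2 ^ (p.2.unpair.1 + 1)) : Bool)) :=
    Primrec₂.comp Primrec.nat_lt.decide hj
      (Primrec₂.comp pow_primrec (Primrec.const 2) (Primrec.succ.comp ha))
  have b4 : Primrec (fun p : ℕ × ℕ =>
      (decide (2 ^ p.2.unpair.2 + p.2.unpair.2 ≤ p.1 + p.2.unpair.1) : Bool)) :=
    Primrec₂.comp Primrec.nat_le.decide
      (Primrec₂.comp Primrec.nat_add (Primrec₂.comp pow_primrec (Primrec.const 2) hj) hj)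
      (Primrec₂.comp Primrec.nat_add hl ha)
  have b5 : Primrec (fun p : ℕ × ℕ =>
      (decide (p.1 + p.2.unpair.1 < 2 ^ (p.2.unpair.2 + 1) + p.2.unpair.2) : Bool)) :=
    Primrec₂.comp Primrec.nat_lt.decide (Primrec₂.comp Primrec.nat_add hl ha)
      (Primrec₂.comp Primrec.nat_add
        (Primrec₂.comp pow_primrec (Primrec.const 2) (Primrec.succ.comp hj)) hj)
  exact (Primrec₂.comp hand (Primrec₂.comp hand (Primrec₂.comp hand
    (Primrec₂.comp hand b1 b2) b3) b4) b5).to₂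

lemma out_computable : Computable₂ out := by
  have ha : Primrec (fun p : Str × ℕ => p.2.unpair.1) :=
    Primrec.fst.comp (Primrec.unpair.comp Primrec.snd)
  have hj : Primrec (fun p : Str × ℕ => p.2.unpair.2) :=
    Primrec.snd.comp (Primrec.unpair.comp Primrec.snd)
  have hlen : Primrec (fun p : Str × ℕ => p.1.length) :=
    Primrec.list_length.comp Primrec.fst
  have harg : Primrec (fun p : Str × ℕ => p.1.length + p.2.unpair.1 - p.2.unpair.2) :=
    Primrec₂.comp Primrec.nat_sub (Primrec₂.comp Primrec.nat_add hlen ha) hj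
  have h : Primrec (fun p : Str × ℕ =>
      dec p.2.unpair.1 p.2.unpair.2 ++
        (dec p.2.unpair.2 (p.1.length + p.2.unpair.1 - p.2.unpair.2) ++ p.1)) :=
    Primrec₂.comp Primrec.list_append (Primrec₂.comp dec_primrec ha hj)
      (Primrec₂.comp Primrec.list_append (Primrec₂.comp dec_primrec hj harg) Primrec.fst)
  exact (h.to₂).to_comp

lemma dipM_partrec : Partrec dipM := by
  have h1 : Computable₂ (fun (σ : Str) (k : ℕ) => goodb σ.length k) :=
    (goodb_primrec.comp (Primrec.list_length.comp Primrec.fst) Primrec.snd).to₂.to_comp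
  exact (Partrec.rfind h1.partrec₂).map out_computable

lemma log_add_le (j d : ℕ) (hj : 1 ≤ j) : Nat.log 2 (j + d) ≤ Nat.log 2 j + d := by
  induction d with
  | zero => simp
  | succ d ih =>
    have h1 : j + (d + 1) ≤ (j + d) * 2 := by omega
    calc Nat.log 2 (j + (d + 1)) ≤ Nat.log 2 ((j + d) * 2) := Nat.log_mono_right h1
      _ = Nat.log 2 (j + d) + 1 := Nat.log_mul_base (by norm_num) (by omega)
      _ ≤ Nat.log 2 j + (d + 1) := by omega

/-- The search condition succeeds for at most one `k`. -/
lemma good_unique {l k k' : ℕ} (h : goodb l k = true) (h' : goodb l k' = true) : k = k' := by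
  obtain ⟨h1, h2, h3, h4, h5⟩ := (goodb_iff l k).1 h
  obtain ⟨h1', h2', h3', h4', h5'⟩ := (goodb_iff l k').1 h'
  have key : ∀ a j a' j' : ℕ, 2 ≤ a → 2 ^ a ≤ j → j < 2 ^ (a + 1) →
      2 ^ j + j ≤ l + a → l + a < 2 ^ (j + 1) + j →
      2 ≤ a' → 2 ^ a' ≤ j' → j' < 2 ^ (a' + 1) →
      2 ^ j' + j' ≤ l + a' → l + a' < 2 ^ (j' + 1) + j' → ¬ j < j' := by
    intro a j a' j' g1 g2 g3 g4 g5 g1' g2' g3' g4' g5' hlt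
    have hea : a = Nat.log 2 j := (Nat.log_eq_of_pow_le_of_lt_pow g2 g3).symm
    have hea' : a' = Nat.log 2 j' := (Nat.log_eq_of_pow_le_of_lt_pow g2' g3').symm
    have hj1 : 1 ≤ j := le_trans (Nat.one_le_two_pow) g2
    have hlog : Nat.log 2 j' ≤ Nat.log 2 j + (j' - j) := by
      have hh := log_add_le j (j' - j) hj1
      rwa [Nat.add_sub_cancel' hlt.le] at hh
    have haa : a' ≤ a + (j' - j) := by rw [hea, hea']; exact hlog
    have hpow : (2:ℕ) ^ (j + 1) ≤ 2 ^ j' := Nat.pow_le_pow_right (by norm_num) (by omega)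
    omega
  have hj : k.unpair.2 = k'.unpair.2 := by
    rcases lt_trichotomy k.unpair.2 k'.unpair.2 with hlt | heq | hgt
    · exact absurd hlt (key _ _ _ _ h1 h2 h3 h4 h5 h1' h2' h3' h4' h5')
    · exact heq
    · exact absurd hgt (key _ _ _ _ h1' h2' h3' h4' h5' h1 h2 h3 h4 h5)
  have ha : k.unpair.1 = k'.unpair.1 := by
    have e1 : k.unpair.1 = Nat.log 2 k.unpair.2 := (Nat.log_eq_of_pow_le_of_lt_pow h2 h3).symm
    have e2 : k'.unpair.1 = Nat.log 2 k'.unpair.2 := (Nat.log_eq_of_pow_le_of_lt_pow h2' h3').symm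
    rw [e1, e2, hj]
  have := Nat.pair_unpair k
  have := Nat.pair_unpair k'
  rw [← Nat.pair_unpair k, ← Nat.pair_unpair k', ha, hj]

lemma cplx_le {M : Str →. Str} {τ σ : Str} (h : τ ∈ M σ) : Cplx M τ ≤ (σ.length : ℕ∞) :=
  sInf_le ⟨σ, h, rfl⟩

/-- The key construction: for each `a ≥ 2` there is a dip of depth about
`a + log₂ n` at some level `n` coded by the first bits of `A`. -/
lemma key_dip (A : Seq) (a : ℕ) (ha : 2 ≤ a) :
    ∃ n l j₁ σ, n = l + (a + j₁) ∧ a ≤ j₁ ∧ Nat.log 2 n ≤ j₁ + 1 ∧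
      (σ : Str).length = l ∧ pre A n ∈ dipM σ := by
  set ρ₁ := pre A a with hρ₁
  set j₁ := 2 ^ a + val ρ₁ with hj₁def
  set ρ₂ := seg A a j₁ with hρ₂
  set j₂ := 2 ^ j₁ + val ρ₂ with hj₂def
  set l := (j₂ - a) + j₁ with hldef
  set n := l + (a + j₁) with hndef
  set σ := seg A (a + j₁) l with hσdef
  have hv₁ : val ρ₁ < 2 ^ a := by have h := val_lt ρ₁; rwa [pre_length] at h
  have hv₂ : val ρ₂ < 2 ^ j₁ := by have h := val_lt ρ₂; rwa [seg_length] at h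
  have h2a : 2 ^ a ≤ j₁ := Nat.le_add_right _ _
  have hjlt : j₁ < 2 ^ (a + 1) := by rw [pow_succ]; omega
  have haj : a ≤ j₁ := le_trans (Nat.lt_two_pow_self (n := a)).le h2a
  have h2j : 2 ^ j₁ ≤ j₂ := Nat.le_add_right _ _
  have hj₂lt : j₂ < 2 ^ (j₁ + 1) := by rw [pow_succ]; omega
  have hjj₂ : j₁ ≤ j₂ := le_trans (Nat.lt_two_pow_self (n := j₁)).le h2j
  have haj₂ : a ≤ j₂ := le_trans haj hjj₂
  have hla : l + a = j₂ + j₁ := by omega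
  have hlogn : Nat.log 2 n ≤ j₁ + 1 := by
    have h1 : 2 * j₁ ≤ 2 ^ (j₁ + 1) := by
      have := (Nat.lt_two_pow_self (n := j₁)).le
      rw [pow_succ]; omega
    have h2 : (2:ℕ) ^ (j₁ + 2) = 2 ^ (j₁ + 1) + 2 ^ (j₁ + 1) := by rw [pow_succ]; ring
    have hnlt : n < 2 ^ (j₁ + 2) := by omega
    have hn0 : n ≠ 0 := by omega
    have := Nat.log_lt_of_lt_pow hn0 hnlt
    omega
  have hσlen : σ.length = l := seg_length A (a + j₁) l
  have hsplit : pre A n = ρ₁ ++ (ρ₂ ++ σ) := by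
    have e1 : pre A (a + j₁) = ρ₁ ++ ρ₂ := pre_add A a j₁
    have e2 : pre A (a + j₁ + l) = pre A (a + j₁) ++ σ := pre_add A (a + j₁) l
    have e3 : n = a + j₁ + l := by omega
    rw [e3, e2, e1, List.append_assoc]
  have hgood : goodb l (Nat.pair a j₁) = true := by
    rw [goodb_iff, Nat.unpair_pair]
    exact ⟨ha, h2a, hjlt, show 2 ^ j₁ + j₁ ≤ l + a by omega,
      show l + a < 2 ^ (j₁ + 1) + j₁ by omega⟩
  have hd1 : dec a j₁ = ρ₁ := by
    have h := dec_val ρ₁ 1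
    rw [pre_length] at h
    rw [show j₁ = val ρ₁ + 2 ^ a * 1 by omega]
    exact h
  have hd2 : dec j₁ j₂ = ρ₂ := by
    have h := dec_val ρ₂ 1
    rw [seg_length] at h
    rw [show j₂ = val ρ₂ + 2 ^ j₁ * 1 by omega]
    exact h
  have hout : out σ (Nat.pair a j₁) = pre A n := by
    rw [out, Nat.unpair_pair]
    have harg : σ.length + a - j₁ = j₂ := by rw [hσlen]; omega
    simp only
    rw [harg, hd1, hd2, hsplit]
  have hmem : pre A n ∈ dipM σ := by
    have hMσ : dipM σ = (Nat.rfind ↑(goodb l)).map (out σ) := by rw [dipM, hσlen]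
    obtain ⟨k, hk, -⟩ := Nat.rfind_min' (p := goodb l) (m := Nat.pair a j₁) hgood
    have hspec : goodb l k = true := by simpa using Nat.rfind_spec hk
    have hkk : k = Nat.pair a j₁ := good_unique hspec hgood
    rw [hkk] at hk
    rw [hMσ, ← hout]
    exact Part.mem_map _ hk
  exact ⟨n, l, j₁, σ, rfl, haj, hlogn, hσlen, hmem⟩

/-- **Martin-Löf's complexity-dip theorem**: for a universal machine `U` and any
`A ∈ 2^ω` there are infinitely many `n` with `C(A↾n) ≤ n - ⌊log₂ n⌋`; in
particular no `A` satisfies `C(A↾n) ≥ n - c` (i.e. `n ≤ C(A↾n) + c`) for all `n`. -/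
theorem complexity_dip (U : Str →. Str) (hU : UniversalMachine U) (A : Seq) :
    (∀ m : ℕ, ∃ n : ℕ, m ≤ n ∧ Cplx U (pre A n) ≤ ((n - Nat.log 2 n : ℕ) : ℕ∞)) ∧
      ¬ ∃ c : ℕ, ∀ n : ℕ, (n : ℕ∞) ≤ Cplx U (pre A n) + c := by
  have main : ∀ m : ℕ, ∃ n : ℕ, m ≤ n ∧ Cplx U (pre A n) ≤ ((n - Nat.log 2 n : ℕ) : ℕ∞) := by
    intro m
    obtain ⟨c, hc⟩ := hU.2 dipM dipM_partrec
    set a := max 2 (max m (c + 1)) with hadef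
    obtain ⟨n, l, j₁, σ, hn, haj, hlogn, hσlen, hmem⟩ := key_dip A a (le_max_left _ _)
    have hma : m ≤ a := le_trans (le_max_left m (c + 1)) (le_max_right _ _)
    have hca : c + 1 ≤ a := le_trans (le_max_right m (c + 1)) (le_max_right _ _)
    refine ⟨n, by omega, ?_⟩
    have hCM : Cplx dipM (pre A n) ≤ (l : ℕ∞) := by
      have h := cplx_le hmem
      rwa [hσlen] at h
    have hnat : l + c ≤ n - Nat.log 2 n := by omega
    calc Cplx U (pre A n) ≤ Cplx dipM (pre A n) + c := hc _
      _ ≤ (l : ℕ∞) + c := add_le_add_left hCM _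
      _ = ((l + c : ℕ) : ℕ∞) := by rw [Nat.cast_add]
      _ ≤ _ := Nat.cast_le.mpr hnat
  refine ⟨main, ?_⟩
  rintro ⟨c, hc⟩
  obtain ⟨n, hn, hC⟩ := main (2 ^ (c + 1))
  have h1 : (1:ℕ) ≤ 2 ^ (c + 1) := Nat.one_le_two_pow
  have hn0 : n ≠ 0 := by omega
  have hlogc : c + 1 ≤ Nat.log 2 n :=
    Nat.le_log_of_pow_le (by norm_num) hn
  have hlogn : Nat.log 2 n ≤ n := Nat.log_le_self 2 n
  have h2 : (n : ℕ∞) ≤ ((n - Nat.log 2 n + c : ℕ) : ℕ∞) := by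
    calc (n : ℕ∞) ≤ Cplx U (pre A n) + c := hc n
      _ ≤ ((n - Nat.log 2 n : ℕ) : ℕ∞) + c := add_le_add_left hC _
      _ = _ := by rw [Nat.cast_add]
  have h3 : n ≤ n - Nat.log 2 n + c := Nat.cast_le.mp h2
  omega

end AR
end

section
/- Martin-Löf random sequences satisfy the strong law of large numbers: for every Martin-Löf random A ∈ 2^ω, lim_{n→∞} (#{i < n : A(i) = 1})/n = 1/2. -/
open scoped ENNReal NNReal Classical

namespace AR

/-- signed deviation of a bit string -/
def X (n : ℕ) (f : Fin n → Bool) : ℤ := ∑ i, (2 * ((f i).toNat : ℤ) - 1)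

lemma X_cons (n : ℕ) (b : Bool) (f : Fin n → Bool) :
    X (n+1) (Fin.cons b f) = (2 * (b.toNat : ℤ) - 1) + X n f := by
  rw [X, Fin.sum_univ_succ]
  simp [X]

lemma sum_pi_succ {M : Type*} [AddCommMonoid M] (n : ℕ) (g : (Fin (n+1) → Bool) → M) :
    ∑ h : Fin (n+1) → Bool, g h
      = ∑ f : Fin n → Bool, (g (Fin.cons true f) + g (Fin.cons false f)) := by
  rw [← Equiv.sum_comp (Fin.consEquiv fun _ => Bool) g, Fintype.sum_prod_type]
  simp [Fin.consEquiv, Fintype.sum_bool, Finset.sum_add_distrib]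

lemma S_eq (n : ℕ) : ∑ f : Fin n → Bool, (X n f)^2 = n * 2^n := by
  induction n with
  | zero => simp [X]
  | succ n ih =>
    rw [sum_pi_succ n (fun h => (X (n+1) h)^2)]
    have : ∀ f : Fin n → Bool,
        (X (n+1) (Fin.cons true f))^2 + (X (n+1) (Fin.cons false f))^2
          = 2 * (X n f)^2 + 2 := by
      intro f; rw [X_cons, X_cons]; simp [Bool.toNat]; ring
    rw [Finset.sum_congr rfl fun f _ => this f, Finset.sum_add_distrib,
      ← Finset.mul_sum, ih]
    simp [Finset.card_univ]
    push_cast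
    ring

lemma T_eq (n : ℕ) : ∑ f : Fin n → Bool, (X n f)^4 = (3 * n^2 - 2 * n) * 2^n := by
  induction n with
  | zero => simp [X]
  | succ n ih =>
    rw [sum_pi_succ n (fun h => (X (n+1) h)^4)]
    have : ∀ f : Fin n → Bool,
        (X (n+1) (Fin.cons true f))^4 + (X (n+1) (Fin.cons false f))^4
          = 2 * (X n f)^4 + 12 * (X n f)^2 + 2 := by
      intro f; rw [X_cons, X_cons]; simp [Bool.toNat]; ring
    rw [Finset.sum_congr rfl fun f _ => this f]
    rw [Finset.sum_add_distrib, Finset.sum_add_distrib, ← Finset.mul_sum, ← Finset.mul_sum,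
      ih, S_eq]
    simp [Finset.card_univ]
    push_cast
    ring


/-- number of `true`s in a string -/
def ones : Str → ℕ := fun σ => σ.foldr (fun b s => cond b (s+1) s) 0

lemma ones_cons (b : Bool) (σ : Str) : ones (b :: σ) = cond b (ones σ + 1) (ones σ) := rfl

lemma ones_ofFn {n : ℕ} (f : Fin n → Bool) : ones (List.ofFn f) = ∑ i, (f i).toNat := by
  induction n with
  | zero => simp [ones]
  | succ n ih =>
    rw [List.ofFn_succ, ones_cons, Fin.sum_univ_succ, ih]
    cases f 0 <;> simp <;> omega

/-- |2·ones σ − |σ|| computed in ℕ -/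
def dev (σ : Str) : ℕ := (2 * ones σ - σ.length) + (σ.length - 2 * ones σ)

lemma X_ofFn {n : ℕ} (f : Fin n → Bool) :
    X n f = 2 * (ones (List.ofFn f) : ℤ) - n := by
  rw [ones_ofFn, X, Finset.sum_sub_distrib, ← Finset.mul_sum]
  push_cast
  simp

lemma dev_ofFn {n : ℕ} (f : Fin n → Bool) : (dev (List.ofFn f) : ℤ) = |X n f| := by
  rw [X_ofFn, dev]
  have : (List.ofFn f).length = n := List.length_ofFn
  rw [this]
  have h := ones_ofFn f
  rcases le_or_gt (2 * ones (List.ofFn f)) n with h1 | h1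
  · rw [abs_of_nonpos (by push_cast; omega)]; push_cast; omega
  · rw [abs_of_pos (by push_cast; omega)]; push_cast; omega

/-- the bad strings of length n for deviation parameter k, as a Finset -/
def badF (k n : ℕ) : Finset Str :=
  ((Finset.univ : Finset (Fin n → Bool)).filter fun f => (n : ℤ) ≤ k * |X n f|).image List.ofFn

lemma mem_badF {k n : ℕ} {σ : Str} (hlen : σ.length = n) (h : n ≤ k * dev σ) :
    σ ∈ badF k n := by
  subst hlen
  refine Finset.mem_image.2 ⟨σ.get, Finset.mem_filter.2 ⟨Finset.mem_univ _, ?_⟩, List.ofFn_get σ⟩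
  have h2 : List.ofFn σ.get = σ := List.ofFn_get σ
  rw [← dev_ofFn σ.get, h2]
  exact_mod_cast h

lemma length_of_mem_badF {k n : ℕ} {σ : Str} (h : σ ∈ badF k n) : σ.length = n := by
  obtain ⟨f, -, rfl⟩ := Finset.mem_image.1 h
  exact List.length_ofFn

lemma badF_card (k n : ℕ) (hn : 1 ≤ n) : (badF k n).card * n^2 ≤ 3 * k^4 * 2^n := by
  rw [badF, Finset.card_image_of_injective _ List.ofFn_injective]
  set B := (Finset.univ : Finset (Fin n → Bool)).filter fun f => (n : ℤ) ≤ k * |X n f|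
  have key : (B.card : ℤ) * n^4 ≤ k^4 * ((3 * n^2 - 2 * n) * 2^n) := by
    calc (B.card : ℤ) * n^4 = ∑ _f ∈ B, (n : ℤ)^4 := by
          rw [Finset.sum_const, nsmul_eq_mul]
      _ ≤ ∑ f ∈ B, k^4 * (X n f)^4 := by
          refine Finset.sum_le_sum fun f hf => ?_
          have := (Finset.mem_filter.1 hf).2
          calc (n:ℤ)^4 ≤ (k * |X n f|)^4 := by
                have h0 : (0:ℤ) ≤ (n:ℤ) := by positivity
                exact pow_le_pow_left₀ h0 this 4
            _ = k^4 * (X n f)^4 := by rw [mul_pow, ← abs_pow, abs_of_nonneg (by positivity)]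
      _ ≤ ∑ f : Fin n → Bool, k^4 * (X n f)^4 := by
          refine Finset.sum_le_sum_of_subset_of_nonneg (Finset.filter_subset _ _)
            fun f _ _ => by positivity
      _ = k^4 * ((3 * n^2 - 2 * n) * 2^n) := by rw [← Finset.mul_sum, T_eq]
  have key2 : (B.card : ℤ) * n^2 * n^2 ≤ (3 * k^4 * 2^n) * n^2 := by
    have h1 : (k:ℤ)^4 * ((3 * n^2 - 2 * n) * 2^n) ≤ (3 * k^4 * 2^n) * n^2 := by
      have h2 : (0:ℤ) ≤ (k:ℤ)^4 * 2^n := by positivity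
      nlinarith [h2, (by exact_mod_cast hn : (1:ℤ) ≤ (n:ℤ))]
    nlinarith [key, h1]
  have hn2 : (0:ℤ) < (n:ℤ)^2 := by positivity
  have := le_of_mul_le_mul_right key2 hn2
  exact_mod_cast this


/-- threshold length for level `i` of the `k`-th test -/
def NN (k i : ℕ) : ℕ := 2 * (3 * k^4) * 2^i

def W (k : ℕ) : Set (ℕ × Str) :=
  {p | NN k p.1 ≤ p.2.length ∧ p.2.length ≤ k * dev p.2}

def U (k i : ℕ) : Set Seq := ⋃ σ ∈ {σ : Str | (i, σ) ∈ W k}, cyl σ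

lemma level_le {μ : MeasureTheory.Measure Seq} (hμ : FairCoin μ) (k n : ℕ) (hn : 1 ≤ n) :
    μ (⋃ σ ∈ (badF k n : Finset Str), cyl σ)
      ≤ ((3 * k^4 : ℕ) : ℝ≥0∞) * (((n : ℝ≥0∞))^2)⁻¹ := by
  have h1 : μ (⋃ σ ∈ (badF k n : Finset Str), cyl σ) ≤ ∑ σ ∈ badF k n, μ (cyl σ) :=
    MeasureTheory.measure_biUnion_finset_le _ _
  have h2 : ∑ σ ∈ badF k n, μ (cyl σ) = (badF k n).card * (2 : ℝ≥0∞)⁻¹ ^ n := by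
    rw [Finset.sum_congr rfl fun σ hσ => by
      rw [hμ σ, length_of_mem_badF hσ]]
    rw [Finset.sum_const, nsmul_eq_mul]
  refine h1.trans (h2.le.trans ?_)
  -- now the ENNReal arithmetic
  have hcast : ((badF k n).card : ℝ≥0∞) * ((n : ℝ≥0∞))^2 ≤ ((3 * k^4 : ℕ) : ℝ≥0∞) * 2^n := by
    have := badF_card k n hn
    exact_mod_cast this
  have hn0 : ((n : ℝ≥0∞))^2 ≠ 0 := by
    simp [pow_ne_zero_iff]
    omega
  have hnt : ((n : ℝ≥0∞))^2 ≠ ∞ := ENNReal.pow_ne_top (ENNReal.natCast_ne_top n)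
  have h2n0 : ((2 : ℝ≥0∞))^n ≠ 0 := by positivity
  have h2nt : ((2 : ℝ≥0∞))^n ≠ ∞ := ENNReal.pow_ne_top ENNReal.ofNat_ne_top
  calc ((badF k n).card : ℝ≥0∞) * (2:ℝ≥0∞)⁻¹ ^ n
      = ((badF k n).card : ℝ≥0∞) * ((2:ℝ≥0∞)^n)⁻¹ := by rw [ENNReal.inv_pow]
    _ = ((badF k n).card * (n : ℝ≥0∞)^2) * ((n : ℝ≥0∞)^2)⁻¹ * ((2:ℝ≥0∞)^n)⁻¹ := by
        rw [mul_assoc ((badF k n).card : ℝ≥0∞), ENNReal.mul_inv_cancel hn0 hnt, mul_one]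
    _ ≤ (((3 * k^4 : ℕ) : ℝ≥0∞) * 2^n) * ((n : ℝ≥0∞)^2)⁻¹ * ((2:ℝ≥0∞)^n)⁻¹ := by
        gcongr
    _ = ((3 * k^4 : ℕ) : ℝ≥0∞) * ((n : ℝ≥0∞)^2)⁻¹ * ((2:ℝ≥0∞)^n * ((2:ℝ≥0∞)^n)⁻¹) := by
        ring
    _ = ((3 * k^4 : ℕ) : ℝ≥0∞) * ((n : ℝ≥0∞)^2)⁻¹ := by
        rw [ENNReal.mul_inv_cancel h2n0 h2nt, mul_one]

lemma tail_le (N : ℕ) (hN : 1 ≤ N) :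
    ∑' n : ℕ, ((((n + N : ℕ) : ℝ≥0∞))^2)⁻¹ ≤ 2 / (N : ℝ≥0∞) := by
  rw [ENNReal.tsum_eq_iSup_sum]
  refine iSup_le fun s => ?_
  obtain ⟨m, hm⟩ := Finset.exists_nat_subset_range s
  have h1 : ∑ n ∈ s, ((((n + N : ℕ) : ℝ≥0∞))^2)⁻¹
      ≤ ∑ n ∈ Finset.range m, ((((n + N : ℕ) : ℝ≥0∞))^2)⁻¹ :=
    Finset.sum_le_sum_of_subset hm
  refine h1.trans ?_
  have h2 : ∑ n ∈ Finset.range m, ((((n + N : ℕ) : ℝ≥0∞))^2)⁻¹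
      = ∑ i ∈ Finset.Ico N (N + m), (((i : ℝ≥0∞))^2)⁻¹ := by
    rw [Finset.sum_Ico_eq_sum_range]
    simp [add_comm, Nat.add_sub_cancel_left]
  rw [h2]
  have h3 : Finset.Ico N (N + m) = Finset.Ioo (N - 1) (N + m) := by
    rw [← Finset.Ico_add_one_left_eq_Ioo]
    congr 1
    omega
  rw [h3]
  have h4 : ∀ i ∈ Finset.Ioo (N - 1) (N + m), (((i : ℝ≥0∞))^2)⁻¹
      = ENNReal.ofReal (((i : ℝ))^2)⁻¹ := by
    intro i hi
    have hi1 : 1 ≤ i := by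
      have := (Finset.mem_Ioo.1 hi).1
      omega
    have hip : (0:ℝ) < (i:ℝ) := by exact_mod_cast hi1
    rw [ENNReal.ofReal_inv_of_pos (by positivity), ENNReal.ofReal_pow hip.le]
    rw [ENNReal.ofReal_natCast]
  rw [Finset.sum_congr rfl h4, ← ENNReal.ofReal_sum_of_nonneg (fun i _ => by positivity)]
  have h5 : (∑ i ∈ Finset.Ioo (N - 1) (N + m), (((i : ℝ))^2)⁻¹) ≤ 2 / (((N - 1 : ℕ) : ℝ) + 1) :=
    sum_Ioo_inv_sq_le (N - 1) (N + m)
  have h6 : (((N - 1 : ℕ) : ℝ) + 1) = (N : ℝ) := by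
    have : N - 1 + 1 = N := by omega
    exact_mod_cast congrArg (Nat.cast : ℕ → ℝ) this
  rw [h6] at h5
  refine (ENNReal.ofReal_le_ofReal h5).trans ?_
  rw [ENNReal.ofReal_div_of_pos (by positivity)]
  simp [ENNReal.ofReal_ofNat, ENNReal.ofReal_natCast]

lemma U_meas {μ : MeasureTheory.Measure Seq} (hμ : FairCoin μ) (k i : ℕ) (hk : 1 ≤ k) :
    μ (U k i) ≤ (2 : ℝ≥0∞)⁻¹ ^ i := by
  have hNN : 1 ≤ NN k i := by
    have h1 : 1 ≤ k^4 := Nat.one_le_pow _ _ hk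
    have h2 : (1:ℕ) ≤ 2^i := Nat.one_le_two_pow
    unfold NN
    nlinarith
  have hsub : U k i ⊆ ⋃ n : ℕ, ⋃ σ ∈ (badF k (n + NN k i) : Finset Str), cyl σ := by
    intro A hA
    simp only [U, Set.mem_iUnion, Set.mem_setOf_eq] at hA
    obtain ⟨σ, hW, hc⟩ := hA
    have h1 : NN k i ≤ σ.length := hW.1
    have h2 : σ.length ≤ k * dev σ := hW.2
    refine Set.mem_iUnion.2 ⟨σ.length - NN k i, ?_⟩
    have hlen : σ.length = (σ.length - NN k i) + NN k i := by omega
    refine Set.mem_iUnion.2 ⟨σ, Set.mem_iUnion.2 ⟨?_, hc⟩⟩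
    exact mem_badF hlen (by omega)
  calc μ (U k i) ≤ ∑' n : ℕ, μ (⋃ σ ∈ (badF k (n + NN k i) : Finset Str), cyl σ) :=
        (MeasureTheory.measure_mono hsub).trans (MeasureTheory.measure_iUnion_le _)
    _ ≤ ∑' n : ℕ, ((3 * k^4 : ℕ) : ℝ≥0∞) * ((((n + NN k i : ℕ) : ℝ≥0∞))^2)⁻¹ := by
        refine ENNReal.tsum_le_tsum fun n => ?_
        exact level_le hμ k (n + NN k i) (by omega)
    _ = ((3 * k^4 : ℕ) : ℝ≥0∞) * ∑' n : ℕ, ((((n + NN k i : ℕ) : ℝ≥0∞))^2)⁻¹ := by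
        rw [ENNReal.tsum_mul_left]
    _ ≤ ((3 * k^4 : ℕ) : ℝ≥0∞) * (2 / ((NN k i : ℕ) : ℝ≥0∞)) := by
        gcongr
        exact tail_le _ hNN
    _ = (2 : ℝ≥0∞)⁻¹ ^ i := by
        have hk4 : 1 ≤ k^4 := Nat.one_le_pow _ _ hk
        have hc0 : ((3 * k^4 : ℕ) : ℝ≥0∞) ≠ 0 := by
          simp only [ne_eq, Nat.cast_eq_zero]
          omega
        have hct : ((3 * k^4 : ℕ) : ℝ≥0∞) ≠ ∞ := ENNReal.natCast_ne_top _
        set c : ℝ≥0∞ := ((3 * k^4 : ℕ) : ℝ≥0∞) with hc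
        have hNNc : ((NN k i : ℕ) : ℝ≥0∞) = 2 * c * 2^i := by
          rw [NN, hc]
          push_cast
          ring
        have h2c0 : (2 : ℝ≥0∞) * c ≠ 0 := by
          simp only [ne_eq, mul_eq_zero, not_or]
          exact ⟨two_ne_zero, hc0⟩
        rw [hNNc, ← ENNReal.inv_pow, div_eq_mul_inv]
        rw [ENNReal.mul_inv (Or.inl h2c0) (Or.inr (by positivity))]
        rw [ENNReal.mul_inv (Or.inl two_ne_zero) (Or.inr hc0)]
        calc c * (2 * (2⁻¹ * c⁻¹ * (2^i)⁻¹))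
            = (2 * 2⁻¹) * (c * c⁻¹) * (2^i)⁻¹ := by ring
          _ = (2^i)⁻¹ := by
              rw [ENNReal.mul_inv_cancel two_ne_zero ENNReal.ofNat_ne_top,
                ENNReal.mul_inv_cancel hc0 hct]
              simp

lemma primrec_ones : Primrec ones := by
  have h : Primrec₂ (fun (_ : Str) (bs : Bool × ℕ) => cond bs.1 (bs.2 + 1) bs.2) :=
    Primrec.cond (Primrec.fst.comp Primrec.snd)
      (Primrec.succ.comp (Primrec.snd.comp Primrec.snd))
      (Primrec.snd.comp Primrec.snd)
  exact (Primrec.list_foldr Primrec.id (Primrec.const 0) h).of_eq fun σ => rfl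

lemma primrec_dev : Primrec dev := by
  have hones : Primrec ones := primrec_ones
  have hlen : Primrec (List.length : Str → ℕ) := Primrec.list_length
  have h2o : Primrec fun σ : Str => 2 * ones σ :=
    Primrec.nat_mul.comp (Primrec.const 2) hones
  exact Primrec.nat_add.comp (Primrec.nat_sub.comp h2o hlen) (Primrec.nat_sub.comp hlen h2o)

lemma W_ce (k : ℕ) : CEPred (· ∈ W k) := by
  have hpow : Primrec₂ (fun (a b : ℕ) => a ^ b) := Primrec₂.unpaired'.1 Nat.Primrec.pow
  have hNN : Primrec fun p : ℕ × Str => NN k p.1 :=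
    Primrec.nat_mul.comp (Primrec.const (2 * (3 * k^4)))
      ((hpow.comp (Primrec.const 2) Primrec.fst))
  have hlen : Primrec fun p : ℕ × Str => p.2.length :=
    Primrec.list_length.comp Primrec.snd
  have hkd : Primrec fun p : ℕ × Str => k * dev p.2 :=
    Primrec.nat_mul.comp (Primrec.const k) (primrec_dev.comp Primrec.snd)
  have h1 : PrimrecPred fun p : ℕ × Str => NN k p.1 ≤ p.2.length :=
    PrimrecRel.comp Primrec.nat_le hNN hlen
  have h2 : PrimrecPred fun p : ℕ × Str => p.2.length ≤ k * dev p.2 :=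
    PrimrecRel.comp Primrec.nat_le hlen hkd
  have h : PrimrecPred fun p : ℕ × Str => NN k p.1 ≤ p.2.length ∧ p.2.length ≤ k * dev p.2 :=
    h1.and h2
  have hcp : ComputablePred fun p : ℕ × Str => p ∈ W k := by
    refine ComputablePred.computable_iff.2 ⟨fun p =>
      decide (NN k p.1 ≤ p.2.length ∧ p.2.length ≤ k * dev p.2), h.decide.to_comp, ?_⟩
    funext p
    simp [W, Set.mem_setOf_eq]
  exact hcp.to_re


lemma length_pre (A : Seq) (m : ℕ) : (pre A m).length = m := by
  simp [pre]

lemma mem_cyl_pre (A : Seq) (m : ℕ) : A ∈ cyl (pre A m) := by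
  show pre A (pre A m).length = pre A m
  rw [length_pre]

lemma ones_pre (A : Seq) (m : ℕ) :
    ones (pre A m) = ((Finset.range m).filter fun i => A i = true).card := by
  rw [pre, ones_ofFn, Finset.card_filter, ← Fin.sum_univ_eq_sum_range]
  refine Finset.sum_congr rfl fun i _ => ?_
  cases h : A i <;> simp [h]

/-- Martin-Löf random sequences satisfy the **strong law of large numbers**:
`lim_n (#{i < n : A(i) = 1})/n = 1/2` for every Martin-Löf random `A`. -/
theorem MLRandom_SLLN (μ : MeasureTheory.Measure Seq) (hμ : FairCoin μ)
    (A : Seq) (hA : MLRandom μ A) :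
    Filter.Tendsto
      (fun n : ℕ => (((Finset.range n).filter fun i => A i = true).card : ℝ) / n)
      Filter.atTop (nhds (1 / 2)) := by
  rw [Metric.tendsto_atTop]
  intro ε hε
  obtain ⟨k', hk'⟩ := exists_nat_one_div_lt hε
  set k := k' + 1 with hkdef
  have hk : 1 ≤ k := Nat.le_add_left 1 k'
  have hkε : 1 / (k : ℝ) < ε := by
    rw [hkdef]
    push_cast
    exact hk'
  -- the k-th test
  have htest : MLTest μ (U k) := ⟨W k, W_ce k, fun i => rfl, fun i => U_meas hμ k i hk⟩
  have hpass := hA (U k) htest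
  rw [Set.mem_iInter] at hpass
  push_neg at hpass
  obtain ⟨i, hi⟩ := hpass
  refine ⟨max (NN k i) 1, fun m hm => ?_⟩
  have hm1 : 1 ≤ m := le_trans (le_max_right _ _) hm
  have hmN : NN k i ≤ m := le_trans (le_max_left _ _) hm
  -- A ∉ U k i: the prefix of length m is not in W
  have hnotW : (i, pre A m) ∉ W k := by
    intro hW
    exact hi (Set.mem_iUnion.2 ⟨pre A m, Set.mem_iUnion.2 ⟨hW, mem_cyl_pre A m⟩⟩)
  have hdevlt : k * dev (pre A m) < m := by
    by_contra h
    push_neg at h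
    exact hnotW ⟨by simpa [length_pre] using hmN, by simpa [length_pre] using h⟩
  -- translate to reals
  set c : ℕ := ((Finset.range m).filter fun i => A i = true).card with hc
  have hones : ones (pre A m) = c := ones_pre A m
  have hdevZ : (dev (pre A m) : ℤ) = |2 * (c : ℤ) - m| := by
    have h1 : (dev (pre A m) : ℤ) = |X m (fun i : Fin m => A i)| := dev_ofFn _
    rw [h1, X_ofFn]
    rw [show List.ofFn (fun i : Fin m => A i) = pre A m from rfl, hones]
  have hdevR : (dev (pre A m) : ℝ) = |2 * (c : ℝ) - m| := by
    have := congrArg (fun z : ℤ => (z : ℝ)) hdevZ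
    push_cast at this
    exact this
  have hm0 : (0:ℝ) < m := by exact_mod_cast hm1
  have hk0 : (0:ℝ) < k := by exact_mod_cast hk
  rw [Real.dist_eq]
  have key : |(c:ℝ) / m - 1/2| = |2 * (c:ℝ) - m| / (2 * m) := by
    have h0 : (c:ℝ) / m - 1/2 = (2 * (c:ℝ) - m) / (2 * m) := by
      field_simp
    rw [h0, abs_div, abs_of_pos (by positivity : (0:ℝ) < 2 * m)]
  rw [key, ← hdevR]
  have hdevRlt : (k : ℝ) * (dev (pre A m)) < m := by exact_mod_cast hdevlt
  have h1 : ((dev (pre A m)) : ℝ) / (2 * m) < 1 / (2 * k) := by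
    rw [div_lt_div_iff₀ (by positivity) (by positivity)]
    nlinarith
  calc ((dev (pre A m)) : ℝ) / (2 * m) < 1 / (2 * k) := h1
    _ ≤ 1 / k := by
        apply one_div_le_one_div_of_le hk0
        linarith
    _ < ε := hkε

end AR
end

section
/- Machine existence (KC) theorem: Given a computable function i ↦ (n_i, σ_i) from ℕ to ℕ × 2^{<ω} such that Σ_{i∈ω} 2^{-n_i} ≤ 1, there exist a prefix-free machine M and a sequence of strings ⟨τ_i⟩_{i∈ω} such that for every i, M(τ_i)↓ = σ_i and |τ_i| = n_i. -/
open scoped ENNReal NNReal Classical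

namespace AR

/-! ### Auxiliary development for the KC theorem -/

namespace KC

/-- Two strings are *incompatible*: they differ at a common position. -/
def Inc (a b : Str) : Prop :=
  ∃ i, ∃ (_ : i < a.length) (_ : i < b.length), a[i] ≠ b[i]

theorem Inc.symm {a b : Str} : Inc a b → Inc b a
  | ⟨i, h1, h2, hne⟩ => ⟨i, h2, h1, Ne.symm hne⟩

theorem Inc.ne {a b : Str} (h : Inc a b) : a ≠ b := by
  rintro rfl; obtain ⟨i, h1, h2, hne⟩ := h; exact hne rfl

theorem Inc.not_prefix {a b : Str} (h : Inc a b) : ¬ a <+: b := fun hp => by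
  obtain ⟨i, h1, h2, hne⟩ := h
  exact hne (hp.getElem h1)

theorem Inc.ext_left {a a' b : Str} (h : Inc a b) (hp : a <+: a') : Inc a' b := by
  obtain ⟨i, h1, h2, hne⟩ := h
  exact ⟨i, lt_of_lt_of_le h1 hp.length_le, h2, by rw [← hp.getElem h1]; exact hne⟩

theorem Inc.ext_right {a b b' : Str} (h : Inc a b) (hp : b <+: b') : Inc a b' :=
  (h.symm.ext_left hp).symm

/-! #### The construction -/

/-- `s` padded with `false`s to length `n`. -/
def pad (s : Str) (n : ℕ) : Str := s ++ (List.range (n - s.length)).map fun _ => false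

/-- The `k`-th sibling of extensions of `s`: `s ++ 0^k ++ 1`. -/
def sib (s : Str) (k : ℕ) : Str := s ++ (List.range (k + 1)).map fun j => decide (j = k)

/-- All siblings needed when allocating a string of length `n` below `s`. -/
def sibs (s : Str) (n : ℕ) : List Str := (List.range (n - s.length)).map (sib s)

/-- One step of the best-fit search. -/
def better (n : ℕ) (acc : Option Str) (s : Str) : Option Str :=
  if s.length ≤ n then
    acc.casesOn (some s) fun t => if t.length < s.length then some s else some t
  else acc

/-- The available string of maximal length `≤ n`, if any. -/
def bestFit (n : ℕ) (L : List Str) : Option Str := L.foldl (better n) none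

/-- Remove a string from the list. -/
def del (s : Str) (L : List Str) : List Str := L.filter fun t => t ≠ s

/-- One step of the KC construction: allocate a string of length `p.1` for the
request `p`, given the list `L` of available strings. -/
def step (p : ℕ × Str) (L : List Str) : Str × List Str :=
  (bestFit p.1 L).casesOn (([], L)) fun s => (pad s p.1, sibs s p.1 ++ del s L)

/-- The list of available strings at stage `i`. -/
def state (F : ℕ → ℕ × Str) : ℕ → List Str
  | 0 => [[]]
  | i + 1 => (step (F i) (state F i)).2

/-- The code allocated to the `i`-th request. -/
def tau (F : ℕ → ℕ × Str) (i : ℕ) : Str := (step (F i) (state F i)).1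

/-- The prefix-free machine built from the request sequence `F`. -/
def KCM (F : ℕ → ℕ × Str) : Str →. Str := fun σ =>
  (Nat.rfind fun i => Part.some (decide (tau F i = σ))).map fun i => (F i).2

/-! #### Basic facts about `pad` and `sib` -/

theorem pad_length {s : Str} {n : ℕ} (h : s.length ≤ n) : (pad s n).length = n := by
  simp [pad]; omega

theorem sib_length (s : Str) (k : ℕ) : (sib s k).length = s.length + (k + 1) := by
  simp [sib]

theorem prefix_pad (s : Str) (n : ℕ) : s <+: pad s n := ⟨_, rfl⟩

theorem prefix_sib (s : Str) (k : ℕ) : s <+: sib s k := ⟨_, rfl⟩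

theorem getElem_app (s : Str) (f : ℕ → Bool) {m j : ℕ} (h : j < m) :
    (s ++ (List.range m).map f)[s.length + j]'(by simpa using by omega) = f j := by
  rw [List.getElem_append_right (by omega)]
  simp

theorem inc_sib_sib (s : Str) {k k' : ℕ} (h : k < k') : Inc (sib s k) (sib s k') := by
  refine ⟨s.length + k, by simp [sib_length], by simp [sib_length]; omega, ?_⟩
  show (s ++ (List.range (k + 1)).map fun j => decide (j = k))[s.length + k]'(by simp) ≠
    (s ++ (List.range (k' + 1)).map fun j => decide (j = k'))[s.length + k]'(by simp; omega)
  rw [getElem_app s _ (by omega), getElem_app s _ (by omega)]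
  simp [Nat.ne_of_lt h]

theorem inc_sib_pad (s : Str) {k n : ℕ} (h : k < n - s.length) : Inc (sib s k) (pad s n) := by
  refine ⟨s.length + k, by simp [sib_length], by simp [pad]; omega, ?_⟩
  show (s ++ (List.range (k + 1)).map fun j => decide (j = k))[s.length + k]'(by simp) ≠
    (s ++ (List.range (n - s.length)).map fun _ => false)[s.length + k]'(by simp; omega)
  rw [getElem_app s _ (by omega), getElem_app s _ (by omega)]
  simp

/-! #### Properties of `bestFit` and `del` -/

theorem better_none_eq (n : ℕ) (s : Str) :
    better n none s = if s.length ≤ n then some s else none := rfl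

theorem better_some_eq (n : ℕ) (t s : Str) :
    better n (some t) s =
      if s.length ≤ n then (if t.length < s.length then some s else some t) else some t := rfl

theorem better_none {n : ℕ} {acc : Option Str} {s : Str} (h : better n acc s = none) :
    acc = none ∧ ¬ s.length ≤ n := by
  by_cases hc : s.length ≤ n
  · cases acc with
    | none => rw [better_none_eq, if_pos hc] at h; cases h
    | some t =>
      rw [better_some_eq, if_pos hc] at h
      by_cases hd : t.length < s.length
      · rw [if_pos hd] at h; cases h
      · rw [if_neg hd] at h; cases h
  · cases acc with
    | none => exact ⟨rfl, hc⟩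
    | some t => rw [better_some_eq, if_neg hc] at h; cases h

theorem better_some {n : ℕ} {acc : Option Str} {s : Str} {u : Str}
    (h : better n acc s = some u) : (u = s ∧ s.length ≤ n) ∨ acc = some u := by
  by_cases hc : s.length ≤ n
  · cases acc with
    | none =>
      rw [better_none_eq, if_pos hc] at h
      exact Or.inl ⟨(Option.some_inj.mp h).symm, hc⟩
    | some t =>
      rw [better_some_eq, if_pos hc] at h
      by_cases hd : t.length < s.length
      · rw [if_pos hd] at h; exact Or.inl ⟨(Option.some_inj.mp h).symm, hc⟩
      · rw [if_neg hd] at h; exact Or.inr h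
  · cases acc with
    | none => rw [better_none_eq, if_neg hc] at h; cases h
    | some t => rw [better_some_eq, if_neg hc] at h; exact Or.inr h

theorem better_le {n : ℕ} {acc : Option Str} {s : Str} {u : Str}
    (hs : s.length ≤ n) (h : better n acc s = some u) : s.length ≤ u.length := by
  cases acc with
  | none =>
    rw [better_none_eq, if_pos hs] at h
    rw [← Option.some_inj.mp h]
  | some t =>
    rw [better_some_eq, if_pos hs] at h
    by_cases hd : t.length < s.length
    · rw [if_pos hd] at h; rw [← Option.some_inj.mp h]
    · rw [if_neg hd] at h; rw [← Option.some_inj.mp h]; exact not_lt.mp hd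

theorem better_acc_le {n : ℕ} {t : Str} {s : Str} {u : Str}
    (h : better n (some t) s = some u) : t.length ≤ u.length := by
  rw [better_some_eq] at h
  by_cases hc : s.length ≤ n
  · rw [if_pos hc] at h
    by_cases hd : t.length < s.length
    · rw [if_pos hd] at h; rw [← Option.some_inj.mp h]; exact le_of_lt hd
    · rw [if_neg hd] at h; rw [← Option.some_inj.mp h]
  · rw [if_neg hc] at h; rw [← Option.some_inj.mp h]

theorem better_len_le {n : ℕ} {acc : Option Str} {s : Str} {u : Str}
    (hacc : ∀ t, acc = some t → t.length ≤ n) (h : better n acc s = some u) :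
    u.length ≤ n := by
  rcases better_some h with ⟨rfl, h2⟩ | h2
  · exact h2
  · exact hacc u h2

theorem bestFit_go (n : ℕ) (L : List Str) : ∀ (acc : Option Str),
    (∀ t, acc = some t → t.length ≤ n) →
    (L.foldl (better n) acc = none → acc = none ∧ ∀ s ∈ L, ¬ s.length ≤ n) ∧
    (∀ u, L.foldl (better n) acc = some u →
      (u ∈ L ∨ acc = some u) ∧ u.length ≤ n ∧
      (∀ s ∈ L, s.length ≤ n → s.length ≤ u.length) ∧
      (∀ t, acc = some t → t.length ≤ u.length)) := by
  induction L with
  | nil =>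
    intro acc hacc
    constructor
    · intro h; exact ⟨h, by simp⟩
    · intro u hu
      simp only [List.foldl_nil] at hu
      refine ⟨Or.inr hu, hacc u hu, by simp, fun t ht => ?_⟩
      rw [hu] at ht; cases ht; exact le_rfl
  | cons s L ih =>
    intro acc hacc
    have hacc' : ∀ t, better n acc s = some t → t.length ≤ n :=
      fun t ht => better_len_le hacc ht
    obtain ⟨H1, H2⟩ := ih (better n acc s) hacc'
    constructor
    · intro h
      simp only [List.foldl_cons] at h
      obtain ⟨h1, h2⟩ := H1 h
      obtain ⟨h3, h4⟩ := better_none h1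
      refine ⟨h3, fun x hx => ?_⟩
      rcases List.mem_cons.mp hx with rfl | hx
      · exact h4
      · exact h2 x hx
    · intro u hu
      simp only [List.foldl_cons] at hu
      obtain ⟨hmem, hlen, hmax, hup⟩ := H2 u hu
      constructor
      · rcases hmem with hm | hm
        · exact Or.inl (List.mem_cons_of_mem _ hm)
        · rcases better_some hm with ⟨rfl, _⟩ | h2
          · exact Or.inl List.mem_cons_self
          · exact Or.inr h2
      refine ⟨hlen, ?_, ?_⟩
      · intro x hx hxn
        rcases List.mem_cons.mp hx with rfl | hx
        · cases hb : better n acc x with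
          | none => exact absurd hxn (better_none hb).2
          | some v => exact le_trans (better_le hxn hb) (hup v hb)
        · exact hmax x hx hxn
      · intro t ht
        cases hb : better n acc s with
        | none =>
          have := (better_none hb).1
          rw [this] at ht; cases ht
        | some v =>
          have h1 : t.length ≤ v.length := better_acc_le (ht ▸ hb)
          exact le_trans h1 (hup v hb)

theorem bestFit_none {n : ℕ} {L : List Str} (h : bestFit n L = none) :
    ∀ s ∈ L, ¬ s.length ≤ n :=
  ((bestFit_go n L none (by simp)).1 h).2

theorem bestFit_some {n : ℕ} {L : List Str} {u : Str} (h : bestFit n L = some u) :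
    u ∈ L ∧ u.length ≤ n ∧ ∀ s ∈ L, s.length ≤ n → s.length ≤ u.length := by
  obtain ⟨hm, h1, h2, -⟩ := (bestFit_go n L none (by simp)).2 u h
  exact ⟨hm.resolve_right (by simp), h1, h2⟩

theorem mem_del {t s : Str} {L : List Str} : t ∈ del s L ↔ t ∈ L ∧ t ≠ s := by
  simp [del]

theorem del_sublist (s : Str) (L : List Str) : (del s L).Sublist L :=
  List.filter_sublist

theorem perm_del {s : Str} {L : List Str} (h : s ∈ L) (hnd : L.Nodup) :
    L.Perm (s :: del s L) := by
  induction L with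
  | nil => cases h
  | cons t L ih =>
    rcases List.mem_cons.mp h with rfl | hm
    · have hnot : ∀ x ∈ L, x ≠ s := fun x hx => by
        rintro rfl; exact (List.nodup_cons.mp hnd).1 hx
      have he : del s (s :: L) = L := by
        simp only [del, List.filter_cons]
        rw [if_neg (by simp)]
        exact List.filter_eq_self.mpr fun x hx => by simpa using hnot x hx
      rw [he]
    · have hnd' := (List.nodup_cons.mp hnd).2
      have hts : t ≠ s := by rintro rfl; exact (List.nodup_cons.mp hnd).1 hm
      have he : del s (t :: L) = t :: del s L := by
        simp only [del, List.filter_cons]; rw [if_pos (by simp [hts])]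
      rw [he]
      exact ((ih hm hnd').cons t).trans (List.Perm.swap s t _)

/-! #### Weights -/

/-- The weight `2^{-|s|}` of a string. -/
noncomputable def wt (s : Str) : ℝ≥0 := 2⁻¹ ^ s.length

/-- Total weight of a list of strings. -/
noncomputable def sumw (L : List Str) : ℝ≥0 := (L.map wt).sum

theorem sumw_append (L₁ L₂ : List Str) : sumw (L₁ ++ L₂) = sumw L₁ + sumw L₂ := by
  simp [sumw]

theorem half_pow (k : ℕ) : (2 : ℝ≥0)⁻¹ ^ (k + 1) + 2⁻¹ ^ (k + 1) = 2⁻¹ ^ k := by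
  have h : (2 : ℝ≥0)⁻¹ + 2⁻¹ = 1 := by
    rw [← two_mul]; exact mul_inv_cancel₀ (by norm_num)
  rw [pow_succ, ← mul_add, h, mul_one]

theorem geo (ℓ : ℕ) : ∀ m : ℕ,
    (((List.range m).map fun k => (2 : ℝ≥0)⁻¹ ^ (ℓ + k + 1)).sum) + 2⁻¹ ^ (ℓ + m) = 2⁻¹ ^ ℓ
  | 0 => by simp
  | m + 1 => by
    rw [List.range_succ, List.map_append, List.sum_append,
      show ℓ + (m + 1) = ℓ + m + 1 by omega]
    simp only [List.map_cons, List.map_nil, List.sum_cons, List.sum_nil, add_zero]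
    rw [add_assoc, half_pow (ℓ + m)]
    exact geo ℓ m

theorem sumw_sibs {s : Str} {n : ℕ} (h : s.length ≤ n) :
    sumw (sibs s n) + (2 : ℝ≥0)⁻¹ ^ n = wt s := by
  have e : sumw (sibs s n)
      = ((List.range (n - s.length)).map fun k => (2 : ℝ≥0)⁻¹ ^ (s.length + k + 1)).sum := by
    rw [sumw, sibs, List.map_map]
    refine congrArg List.sum (List.map_congr_left fun k _ => ?_)
    show wt (sib s k) = _
    rw [wt, sib_length, ← add_assoc]
  rw [e]
  have h2 := geo s.length (n - s.length)
  rwa [Nat.add_sub_cancel' h] at h2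

theorem sum_Ioc_pow (n M : ℕ) (hM : n ≤ M) :
    (∑ k ∈ Finset.Ioc n M, (2 : ℝ≥0)⁻¹ ^ k) + 2⁻¹ ^ M = 2⁻¹ ^ n := by
  induction M, hM using Nat.le_induction with
  | base => simp
  | succ M hM ih =>
    rw [Finset.sum_Ioc_succ_top hM, add_assoc, half_pow M]
    exact ih

theorem sum_pow_lt {n : ℕ} {l : List ℕ} (hnd : l.Nodup) (hgt : ∀ k ∈ l, n < k) :
    (l.map fun k => (2 : ℝ≥0)⁻¹ ^ k).sum < 2⁻¹ ^ n := by
  have hpos : (0 : ℝ≥0) < 2⁻¹ ^ n := pow_pos (by norm_num) n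
  rcases eq_or_ne l [] with rfl | hne'
  · simpa using hpos
  · obtain ⟨a, ha⟩ := List.exists_mem_of_ne_nil l hne'
    have hne : l.toFinset.Nonempty := ⟨a, List.mem_toFinset.mpr ha⟩
    rw [← List.sum_toFinset _ hnd]
    set S := l.toFinset with hS
    have hgt' : ∀ k ∈ S, n < k := fun k hk => hgt k (List.mem_toFinset.mp hk)
    set M := S.max' hne with hM
    have hsub : S ⊆ Finset.Ioc n M := fun k hk =>
      Finset.mem_Ioc.mpr ⟨hgt' k hk, S.le_max' k hk⟩
    have h1 : (∑ k ∈ S, (2 : ℝ≥0)⁻¹ ^ k) ≤ ∑ k ∈ Finset.Ioc n M, (2 : ℝ≥0)⁻¹ ^ k :=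
      Finset.sum_le_sum_of_subset hsub
    have h2 := sum_Ioc_pow n M (le_of_lt (hgt' M (S.max'_mem hne)))
    calc (∑ k ∈ S, (2 : ℝ≥0)⁻¹ ^ k) < (∑ k ∈ S, (2 : ℝ≥0)⁻¹ ^ k) + 2⁻¹ ^ M :=
          lt_add_of_pos_right _ (pow_pos (by norm_num) M)
      _ ≤ (∑ k ∈ Finset.Ioc n M, (2 : ℝ≥0)⁻¹ ^ k) + 2⁻¹ ^ M := add_le_add_left h1 _
      _ = 2⁻¹ ^ n := h2

theorem exists_short {n : ℕ} {L : List Str} (hnd : (L.map List.length).Nodup)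
    (hle : (2 : ℝ≥0)⁻¹ ^ n ≤ sumw L) : ∃ s ∈ L, s.length ≤ n := by
  by_contra hcon
  push_neg at hcon
  have e : sumw L = ((L.map List.length).map fun k => (2 : ℝ≥0)⁻¹ ^ k).sum := by
    rw [sumw, List.map_map]; rfl
  have hlt : sumw L < 2⁻¹ ^ n := by
    rw [e]
    refine sum_pow_lt hnd ?_
    intro k hk
    simp only [List.mem_map] at hk
    obtain ⟨s, hs, rfl⟩ := hk
    exact hcon s hs
  exact absurd hle (not_le.mpr hlt)

/-! #### The invariant of the construction -/

theorem state_succ_of (F : ℕ → ℕ × Str) {i : ℕ} {u : Str}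
    (hu : bestFit (F i).1 (state F i) = some u) :
    state F (i + 1) = sibs u (F i).1 ++ del u (state F i) := by
  show (step (F i) (state F i)).2 = _
  unfold step
  rw [hu]

theorem tau_eq_of (F : ℕ → ℕ × Str) {i : ℕ} {u : Str}
    (hu : bestFit (F i).1 (state F i) = some u) :
    tau F i = pad u (F i).1 := by
  show (step (F i) (state F i)).1 = _
  unfold step
  rw [hu]

theorem main (F : ℕ → ℕ × Str)
    (hB : ∀ i, ∑ j ∈ Finset.range i, (2 : ℝ≥0)⁻¹ ^ (F j).1 ≤ 1) : ∀ i : ℕ,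
    (state F i).Pairwise Inc ∧
    ((state F i).map List.length).Nodup ∧
    (∀ s ∈ state F i, ∀ j, j < i → Inc s (tau F j)) ∧
    sumw (state F i) + ∑ j ∈ Finset.range i, (2 : ℝ≥0)⁻¹ ^ (F j).1 = 1 := by
  intro i
  induction i with
  | zero =>
    refine ⟨by simp [state], by simp [state], fun s _ j hj => absurd hj (by omega), ?_⟩
    simp [state, sumw, wt]
  | succ i ih =>
    obtain ⟨hpw, hnd, hinc, hsum⟩ := ih
    set n := (F i).1 with hn
    -- the budget suffices for the current request
    have hbud : (2 : ℝ≥0)⁻¹ ^ n ≤ sumw (state F i) := by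
      have h1 : (∑ j ∈ Finset.range i, (2 : ℝ≥0)⁻¹ ^ (F j).1) + 2⁻¹ ^ n ≤ 1 := by
        have h := hB (i + 1); rwa [Finset.sum_range_succ] at h
      rw [← hsum, add_comm (∑ j ∈ Finset.range i, (2 : ℝ≥0)⁻¹ ^ (F j).1)] at h1
      exact (add_le_add_iff_right _).mp h1
    obtain ⟨s₀, hs₀, hlen₀⟩ := exists_short hnd hbud
    obtain ⟨u, hu⟩ : ∃ u, bestFit n (state F i) = some u := by
      cases hbf : bestFit n (state F i) with
      | none => exact absurd hlen₀ (bestFit_none hbf s₀ hs₀)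
      | some u => exact ⟨u, rfl⟩
    obtain ⟨huL, hun, humax⟩ := bestFit_some hu
    have hstate : state F (i + 1) = sibs u n ++ del u (state F i) := state_succ_of F hu
    have htau : tau F i = pad u n := tau_eq_of F hu
    have hLnd : (state F i).Nodup := hpw.imp fun h => h.ne
    have hIncAll : ∀ a ∈ state F i, ∀ b ∈ state F i, a ≠ b → Inc a b :=
      fun a ha b hb hab => (haveI : Std.Symm Inc := ⟨fun _ _ h => h.symm⟩; hpw.forall ha hb hab)
    have hmem_sibs : ∀ t ∈ sibs u n, ∃ k, k < n - u.length ∧ t = sib u k := by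
      intro t ht
      simp only [sibs, List.mem_map, List.mem_range] at ht
      obtain ⟨k, hk, rfl⟩ := ht
      exact ⟨k, hk, rfl⟩
    refine ⟨?_, ?_, ?_, ?_⟩
    -- 1. pairwise incompatible
    · rw [hstate, List.pairwise_append]
      refine ⟨?_, List.Pairwise.sublist (del_sublist u _) hpw, ?_⟩
      · rw [sibs, List.pairwise_map]
        exact List.pairwise_lt_range.imp fun h => inc_sib_sib u h
      · intro a ha b hb
        obtain ⟨k, hk, rfl⟩ := hmem_sibs a ha
        obtain ⟨hbL, hbu⟩ := mem_del.mp hb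
        exact (hIncAll u huL b hbL (Ne.symm hbu)).ext_left (prefix_sib u k)
    -- 2. lengths are distinct
    · rw [hstate, List.map_append, List.nodup_append]
      refine ⟨?_, ?_, ?_⟩
      · have e : (sibs u n).map List.length
            = (List.range (n - u.length)).map fun k => u.length + (k + 1) := by
          rw [sibs, List.map_map]
          exact List.map_congr_left fun k _ => sib_length u k
        rw [e]
        exact List.nodup_range.map fun a b h => by omega
      · exact List.Nodup.sublist (List.Sublist.map _ (del_sublist u _)) hnd
      · intro x hx x' hx' hxx
        subst hxx
        simp only [List.mem_map] at hx hx'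
        obtain ⟨a, ha, rfl⟩ := hx
        obtain ⟨k, hk, rfl⟩ := hmem_sibs a ha
        obtain ⟨t, htd, hlen⟩ := hx'
        obtain ⟨htL, htu⟩ := mem_del.mp htd
        rw [sib_length] at hlen
        have h1 : t.length ≤ n := by omega
        have h2 : t.length ≤ u.length := humax t htL h1
        omega
    -- 3. incompatible with all previously issued codes
    · intro t ht j hj
      rw [hstate] at ht
      rcases List.mem_append.mp ht with hts | htd
      · obtain ⟨k, hk, rfl⟩ := hmem_sibs t hts
        rcases Nat.lt_succ_iff_lt_or_eq.mp hj with hj' | rfl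
        · exact (hinc u huL j hj').ext_left (prefix_sib u k)
        · rw [htau]; exact inc_sib_pad u hk
      · obtain ⟨htL, htu⟩ := mem_del.mp htd
        rcases Nat.lt_succ_iff_lt_or_eq.mp hj with hj' | rfl
        · exact hinc t htL j hj'
        · rw [htau]
          exact (hIncAll t htL u huL htu).ext_right (prefix_pad u n)
    -- 4. weight bookkeeping
    · rw [hstate, sumw_append, Finset.sum_range_succ, ← hn]
      have h₁ : sumw (state F i) = wt u + sumw (del u (state F i)) := by
        have hp := perm_del huL hLnd
        have := (hp.map wt).sum_eq
        simpa [sumw] using this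
      have h₂ := sumw_sibs (s := u) (n := n) hun
      calc sumw (sibs u n) + sumw (del u (state F i))
            + (∑ j ∈ Finset.range i, (2 : ℝ≥0)⁻¹ ^ (F j).1 + 2⁻¹ ^ n)
          = (sumw (sibs u n) + 2⁻¹ ^ n) + sumw (del u (state F i))
            + ∑ j ∈ Finset.range i, (2 : ℝ≥0)⁻¹ ^ (F j).1 := by ring
        _ = wt u + sumw (del u (state F i))
            + ∑ j ∈ Finset.range i, (2 : ℝ≥0)⁻¹ ^ (F j).1 := by rw [h₂]
        _ = sumw (state F i) + ∑ j ∈ Finset.range i, (2 : ℝ≥0)⁻¹ ^ (F j).1 := by rw [h₁]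
        _ = 1 := hsum

theorem fit (F : ℕ → ℕ × Str)
    (hB : ∀ i, ∑ j ∈ Finset.range i, (2 : ℝ≥0)⁻¹ ^ (F j).1 ≤ 1) (i : ℕ) :
    ∃ u, bestFit (F i).1 (state F i) = some u ∧ u ∈ state F i ∧ u.length ≤ (F i).1 := by
  obtain ⟨-, hnd, -, hsum⟩ := main F hB i
  have hbud : (2 : ℝ≥0)⁻¹ ^ (F i).1 ≤ sumw (state F i) := by
    have h1 : (∑ j ∈ Finset.range i, (2 : ℝ≥0)⁻¹ ^ (F j).1) + 2⁻¹ ^ (F i).1 ≤ 1 := by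
      have h := hB (i + 1); rwa [Finset.sum_range_succ] at h
    rw [← hsum, add_comm (∑ j ∈ Finset.range i, (2 : ℝ≥0)⁻¹ ^ (F j).1)] at h1
    exact (add_le_add_iff_right _).mp h1
  obtain ⟨s₀, hs₀, hlen₀⟩ := exists_short hnd hbud
  cases hbf : bestFit (F i).1 (state F i) with
  | none => exact absurd hlen₀ (bestFit_none hbf s₀ hs₀)
  | some u =>
    obtain ⟨h1, h2, -⟩ := bestFit_some hbf
    exact ⟨u, rfl, h1, h2⟩

theorem tau_length (F : ℕ → ℕ × Str)
    (hB : ∀ i, ∑ j ∈ Finset.range i, (2 : ℝ≥0)⁻¹ ^ (F j).1 ≤ 1) (i : ℕ) :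
    (tau F i).length = (F i).1 := by
  obtain ⟨u, hu, -, hlen⟩ := fit F hB i
  rw [tau_eq_of F hu, pad_length hlen]

theorem tau_inc (F : ℕ → ℕ × Str)
    (hB : ∀ i, ∑ j ∈ Finset.range i, (2 : ℝ≥0)⁻¹ ^ (F j).1 ≤ 1) :
    ∀ i j, i ≠ j → Inc (tau F i) (tau F j) := by
  have key : ∀ j i, j < i → Inc (tau F i) (tau F j) := by
    intro j i hji
    obtain ⟨u, hu, huL, -⟩ := fit F hB i
    have hinc := (main F hB i).2.2.1 u huL j hji
    rw [tau_eq_of F hu]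
    exact hinc.ext_left (prefix_pad _ _)
  intro i j hij
  rcases lt_or_gt_of_ne hij with h | h
  · exact (key i j h).symm
  · exact key j i h

/-! #### The machine `KCM` -/

theorem KCM_dom {F : ℕ → ℕ × Str} {σ : Str} (h : (KCM F σ).Dom) : ∃ i, σ = tau F i := by
  have h' : (Nat.rfind fun i => Part.some (decide (tau F i = σ))).Dom := h
  obtain ⟨i, hi, -⟩ := Nat.rfind_dom.mp h'
  rw [Part.mem_some_iff] at hi
  exact ⟨i, (of_decide_eq_true hi.symm).symm⟩

theorem KCM_dom_of {F : ℕ → ℕ × Str} (i : ℕ) : (KCM F (tau F i)).Dom := by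
  show (Nat.rfind fun j => Part.some (decide (tau F j = tau F i))).Dom
  exact Nat.rfind_dom.mpr ⟨i, Part.mem_some_iff.mpr (by simp), fun _ => trivial⟩

theorem KCM_eval (F : ℕ → ℕ × Str)
    (hB : ∀ i, ∑ j ∈ Finset.range i, (2 : ℝ≥0)⁻¹ ^ (F j).1 ≤ 1) (i : ℕ) :
    KCM F (tau F i) = Part.some (F i).2 := by
  have h1 : (Nat.rfind fun j => Part.some (decide (tau F j = tau F i))) = Part.some i := by
    apply Part.eq_some_iff.mpr
    apply Nat.mem_rfind.mpr
    refine ⟨Part.mem_some_iff.mpr (by simp), fun {m} hm => ?_⟩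
    have hne : tau F m ≠ tau F i := (tau_inc F hB m i (Nat.ne_of_lt hm)).ne
    exact Part.mem_some_iff.mpr (by simp [hne])
  show (Nat.rfind fun j => Part.some (decide (tau F j = tau F i))).map (fun j => (F j).2)
      = Part.some (F i).2
  rw [h1, Part.map_some]

/-! #### Computability -/

theorem primrec_pad : Primrec (fun p : Str × ℕ => pad p.1 p.2) := by
  have h1 : Primrec (fun p : Str × ℕ => List.range (p.2 - p.1.length)) :=
    Primrec.list_range.comp (Primrec.nat_sub.comp Primrec.snd
      (Primrec.list_length.comp Primrec.fst))
  have h2 : Primrec (fun p : Str × ℕ =>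
      (List.range (p.2 - p.1.length)).map fun _ => false) :=
    Primrec.list_map h1 ((Primrec.const false).comp Primrec.fst).to₂
  exact Primrec.list_append.comp Primrec.fst h2

theorem primrec_sib : Primrec (fun p : Str × ℕ => sib p.1 p.2) := by
  have h1 : Primrec (fun p : Str × ℕ => List.range (p.2 + 1)) :=
    Primrec.list_range.comp (Primrec.succ.comp Primrec.snd)
  have h2 : Primrec (fun p : Str × ℕ =>
      (List.range (p.2 + 1)).map fun j => decide (j = p.2)) :=
    Primrec.list_map h1 (Primrec.eq.comp Primrec.snd (Primrec.snd.comp Primrec.fst)).decide.to₂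
  exact Primrec.list_append.comp Primrec.fst h2

theorem primrec_sibs : Primrec (fun p : Str × ℕ => sibs p.1 p.2) := by
  have h1 : Primrec (fun p : Str × ℕ => List.range (p.2 - p.1.length)) :=
    Primrec.list_range.comp (Primrec.nat_sub.comp Primrec.snd
      (Primrec.list_length.comp Primrec.fst))
  exact Primrec.list_map h1 (primrec_sib.comp
    ((Primrec.fst.comp Primrec.fst).pair Primrec.snd)).to₂

theorem primrec_bestFit : Primrec (fun p : ℕ × List Str => bestFit p.1 p.2) := by
  have hh : Primrec (fun x : (ℕ × List Str) × Option Str × Str => better x.1.1 x.2.1 x.2.2) := by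
    have hn : Primrec (fun x : (ℕ × List Str) × Option Str × Str => x.1.1) :=
      Primrec.fst.comp Primrec.fst
    have hacc : Primrec (fun x : (ℕ × List Str) × Option Str × Str => x.2.1) :=
      Primrec.fst.comp Primrec.snd
    have hs : Primrec (fun x : (ℕ × List Str) × Option Str × Str => x.2.2) :=
      Primrec.snd.comp Primrec.snd
    have hinner : Primrec (fun x : (ℕ × List Str) × Option Str × Str =>
        Option.casesOn (motive := fun _ => Option Str) x.2.1 (some x.2.2)
          fun t => if t.length < x.2.2.length then some x.2.2 else some t) := by
      have hg : Primrec (fun y : ((ℕ × List Str) × Option Str × Str) × Str =>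
          if y.2.length < y.1.2.2.length then some y.1.2.2 else some y.2) := by
        have hc : PrimrecPred (fun y : ((ℕ × List Str) × Option Str × Str) × Str =>
            y.2.length < y.1.2.2.length) :=
          Primrec.nat_lt.comp (Primrec.list_length.comp Primrec.snd)
            (Primrec.list_length.comp (hs.comp Primrec.fst))
        exact Primrec.ite hc (Primrec.option_some.comp (hs.comp Primrec.fst))
          (Primrec.option_some.comp Primrec.snd)
      exact Primrec.option_casesOn hacc (Primrec.option_some.comp hs) hg.to₂
    exact Primrec.ite (Primrec.nat_le.comp (Primrec.list_length.comp hs) hn) hinner hacc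
  exact Primrec.list_foldl (Primrec.snd : Primrec fun p : ℕ × List Str => p.2)
    (Primrec.const (none : Option Str)) hh.to₂

theorem primrec_del : Primrec (fun p : Str × List Str => del p.1 p.2) := by
  have hh : Primrec (fun x : (Str × List Str) × Str × List Str =>
      if x.2.1 = x.1.1 then x.2.2 else x.2.1 :: x.2.2) := by
    have hc : PrimrecPred (fun x : (Str × List Str) × Str × List Str => x.2.1 = x.1.1) :=
      Primrec.eq.comp (Primrec.fst.comp Primrec.snd) (Primrec.fst.comp Primrec.fst)
    have ht : Primrec (fun x : (Str × List Str) × Str × List Str => x.2.2) :=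
      Primrec.snd.comp Primrec.snd
    have he : Primrec (fun x : (Str × List Str) × Str × List Str => x.2.1 :: x.2.2) :=
      Primrec.list_cons.comp (Primrec.fst.comp Primrec.snd) (Primrec.snd.comp Primrec.snd)
    exact Primrec.ite hc ht he
  have := Primrec.list_foldr (Primrec.snd : Primrec fun p : Str × List Str => p.2)
    (Primrec.const ([] : List Str)) hh.to₂
  refine this.of_eq fun p => ?_
  show p.2.foldr (fun t r => if t = p.1 then r else t :: r) [] = del p.1 p.2
  induction p.2 with
  | nil => rfl
  | cons t L ih =>
    by_cases h : t = p.1 <;> simp [del, List.filter_cons, h] at ih ⊢ <;> exact ih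

theorem primrec_step : Primrec (fun p : (ℕ × Str) × List Str => step p.1 p.2) := by
  have hbf : Primrec (fun p : (ℕ × Str) × List Str => bestFit p.1.1 p.2) :=
    primrec_bestFit.comp ((Primrec.fst.comp Primrec.fst).pair Primrec.snd)
  have hn : Primrec (fun x : ((ℕ × Str) × List Str) × Str => x.1.1.1) :=
    Primrec.fst.comp (Primrec.fst.comp Primrec.fst)
  have hg : Primrec (fun x : ((ℕ × Str) × List Str) × Str =>
      (pad x.2 x.1.1.1, sibs x.2 x.1.1.1 ++ del x.2 x.1.2)) :=
    (primrec_pad.comp (Primrec.snd.pair hn)).pair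
      (Primrec.list_append.comp (primrec_sibs.comp (Primrec.snd.pair hn))
        (primrec_del.comp (Primrec.snd.pair (Primrec.snd.comp Primrec.fst))))
  have H : Primrec (fun p : (ℕ × Str) × List Str =>
      Option.casesOn (motive := fun _ => Str × List Str) (bestFit p.1.1 p.2)
        (([], p.2)) fun s => (pad s p.1.1, sibs s p.1.1 ++ del s p.2)) :=
    Primrec.option_casesOn hbf ((Primrec.const ([] : Str)).pair Primrec.snd) hg.to₂
  exact H.of_eq fun p => rfl

attribute [irreducible] step

theorem computable_state {F : ℕ → ℕ × Str} (hF : Computable F) : Computable (state F) := by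
  have h1 : Computable (fun x : ℕ × ℕ × List Str => ((F x.2.1, x.2.2) : (ℕ × Str) × List Str)) :=
    (hF.comp (Computable.fst.comp Computable.snd)).pair (Computable.snd.comp Computable.snd)
  have hh : Computable (fun x : ℕ × ℕ × List Str => (step (F x.2.1) x.2.2).2) :=
    Computable.snd.comp (primrec_step.to_comp.comp h1)
  have := Computable.nat_rec Computable.id (Computable.const ([[]] : List Str)) hh.to₂
  refine this.of_eq fun i => ?_
  induction i with
  | zero => rfl
  | succ n ih => simp only [state]; rw [← ih]; exact rfl

theorem computable_tau {F : ℕ → ℕ × Str} (hF : Computable F) : Computable (tau F) := by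
  have h1 : Computable (fun i : ℕ => ((F i, state F i) : (ℕ × Str) × List Str)) :=
    hF.pair (computable_state hF)
  exact Computable.fst.comp (primrec_step.to_comp.comp h1)

theorem partrec_KCM {F : ℕ → ℕ × Str} (hF : Computable F) : Partrec (KCM F) := by
  have hc : Computable (fun p : Str × ℕ => decide (tau F p.2 = p.1)) :=
    Primrec.eq.decide.to_comp.comp ((computable_tau hF).comp Computable.snd) Computable.fst
  have hp : Partrec₂ (fun (σ : Str) (i : ℕ) => (Part.some (decide (tau F i = σ)) : Part Bool)) :=
    Computable₂.partrec₂ hc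
  have hg : Computable (fun p : Str × ℕ => (F p.2).2) :=
    Computable.snd.comp (hF.comp Computable.snd)
  exact (Partrec.rfind hp).map hg.to₂

end KC

/-- **Machine existence (KC) theorem**: given a computable enumeration of requests
`i ↦ (n_i, σ_i)` with `Σ_i 2^{-n_i} ≤ 1`, there are a prefix-free machine `M` and
strings `⟨τ_i⟩` with `M(τ_i)↓ = σ_i` and `|τ_i| = n_i` for every `i`. -/
theorem machine_existence (F : ℕ → ℕ × Str) (hF : Computable F)
    (hwt : (∑' i : ℕ, (2 : ℝ≥0∞)⁻¹ ^ (F i).1) ≤ 1) :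
    ∃ M : Str →. Str, PrefixFreeMachine M ∧
      ∃ τ : ℕ → Str, ∀ i : ℕ,
        M (τ i) = Part.some (F i).2 ∧ (τ i).length = (F i).1 := by
  have hcast : ∀ k : ℕ, (((2 : ℝ≥0)⁻¹ ^ k : ℝ≥0) : ℝ≥0∞) = (2 : ℝ≥0∞)⁻¹ ^ k := by
    intro k
    rw [ENNReal.coe_pow, ENNReal.coe_inv (by norm_num)]
    norm_num
  have hB : ∀ i, ∑ j ∈ Finset.range i, (2 : ℝ≥0)⁻¹ ^ (F j).1 ≤ 1 := by
    intro i
    have h1 : ∑ j ∈ Finset.range i, (2 : ℝ≥0∞)⁻¹ ^ (F j).1 ≤ 1 :=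
      le_trans (ENNReal.sum_le_tsum _) hwt
    have h2 : ((∑ j ∈ Finset.range i, (2 : ℝ≥0)⁻¹ ^ (F j).1 : ℝ≥0) : ℝ≥0∞)
        = ∑ j ∈ Finset.range i, (2 : ℝ≥0∞)⁻¹ ^ (F j).1 := by
      rw [ENNReal.coe_finset_sum]
      exact Finset.sum_congr rfl fun j _ => hcast _
    rw [← h2] at h1
    exact_mod_cast h1
  refine ⟨KC.KCM F, ⟨KC.partrec_KCM hF, ?_⟩, KC.tau F,
    fun i => ⟨KC.KCM_eval F hB i, KC.tau_length F hB i⟩⟩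
  intro σ hσ τ' hτ' hpre
  obtain ⟨i, rfl⟩ := KC.KCM_dom hσ
  obtain ⟨j, rfl⟩ := KC.KCM_dom hτ'
  by_cases hij : i = j
  · rw [hij]
  · exact absurd hpre (KC.tau_inc F hB i j hij).not_prefix

end AR
end
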